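/- If O₁ is θ₁-averaged and O₂ is θ₂-averaged with θ₁, θ₂ ∈ (0,1), then the composition O₁ ∘ O₂ is θ-averaged with θ = (θ₁ + θ₂ − 2θ₁θ₂)/(1 − θ₁θ₂), and moreover θ ∈ (0,1). -/

import Mathlib

private lemma key_ineq (a b A B C P Q S : ℝ) (ha : 0 < a) (ha1 : a < 1)
    (hb : 0 < b) (hb1 : b < 1)
    (H2 : B - 2*(1-b)*P + (1-b)^2*A ≤ b^2*A)
    (H1 : C - 2*(1-a)*Q + (1-a)^2*B ≤ a^2*B)
    (H3 : 0 ≤ (a*(1-b))^2*(A - 2*P + B) - 2*(a*(1-b))*(b*(1-a))*(P - S - B + Q)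
          + (b*(1-a))^2*(B - 2*Q + C)) :
    C - 2*((1-a)*(1-b)/(1-a*b))*S + ((1-a)*(1-b)/(1-a*b))^2*A
      ≤ ((a+b-2*a*b)/(1-a*b))^2*A := by
  have hD : 0 < 1 - a*b := by nlinarith
  have hN : 0 < a + b - 2*a*b := by nlinarith
  have h2N := mul_le_mul_of_nonneg_left H2
    (le_of_lt (by positivity : (0:ℝ) < a*(a+b-2*a*b)))
  have h1N := mul_le_mul_of_nonneg_left H1
    (le_of_lt (by positivity : (0:ℝ) < b*(a+b-2*a*b)))
  have hL' : a*b*((a+b-2*a*b)*C + (1-a)*(1-b)*(A-2*S+C))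
      ≤ a*b*((a+b-2*a*b)*A) := by nlinarith [h2N, h1N, H3]
  have hL : (a+b-2*a*b)*C + (1-a)*(1-b)*(A-2*S+C) ≤ (a+b-2*a*b)*A :=
    (mul_le_mul_iff_right₀ (by positivity)).mp hL'
  have hG : (1-a*b)^2*C - 2*(1-a*b)*((1-a)*(1-b))*S + ((1-a)*(1-b))^2*A
      ≤ (a+b-2*a*b)^2*A := by
    nlinarith [mul_le_mul_of_nonneg_left hL hD.le]
  have hD2 : (0:ℝ) < (1-a*b)^2 := by positivity
  have e1 : C - 2*((1-a)*(1-b)/(1-a*b))*S + ((1-a)*(1-b)/(1-a*b))^2*A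
      = ((1-a*b)^2*C - 2*(1-a*b)*((1-a)*(1-b))*S + ((1-a)*(1-b))^2*A)/(1-a*b)^2 := by
    field_simp
  have e2 : ((a+b-2*a*b)/(1-a*b))^2*A = ((a+b-2*a*b)^2*A)/(1-a*b)^2 := by
    field_simp
  rw [e1, e2]
  gcongr

open RealInnerProductSpace in
private lemma norm_sub_smul_sq {E : Type*} [NormedAddCommGroup E] [InnerProductSpace ℝ E]
    (t : ℝ) (x u : E) :
    ‖x - t • u‖ ^ 2 = ‖x‖^2 - 2*t*⟪x, u⟫ + t^2*‖u‖^2 := by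
  rw [norm_sub_sq_real, real_inner_smul_right, norm_smul]
  simp [mul_pow, sq_abs]; ring

open RealInnerProductSpace in
private lemma key_vec {E : Type*} [NormedAddCommGroup E] [InnerProductSpace ℝ E]
    (a b : ℝ) (ha : 0 < a) (ha1 : a < 1) (hb : 0 < b) (hb1 : b < 1)
    (u v w : E)
    (hv : ‖v - (1-b) • u‖ ≤ b*‖u‖) (hw : ‖w - (1-a) • v‖ ≤ a*‖v‖) :
    ‖w - ((1-a)*(1-b)/(1-a*b)) • u‖ ≤ ((a+b-2*a*b)/(1-a*b))*‖u‖ := by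
  have hD : 0 < 1 - a*b := by nlinarith
  have hN : 0 < a + b - 2*a*b := by nlinarith
  have hv2 : ‖v - (1-b) • u‖^2 ≤ b^2*‖u‖^2 := by
    have := pow_le_pow_left₀ (norm_nonneg _) hv 2
    rwa [mul_pow] at this
  have hw2 : ‖w - (1-a) • v‖^2 ≤ a^2*‖v‖^2 := by
    have := pow_le_pow_left₀ (norm_nonneg _) hw 2
    rwa [mul_pow] at this
  rw [norm_sub_smul_sq] at hv2 hw2
  have H3v : (0:ℝ) ≤ ‖(a*(1-b)) • (u-v) - (b*(1-a)) • (v-w)‖^2 := by positivity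
  have e3 : ‖(a*(1-b)) • (u-v) - (b*(1-a)) • (v-w)‖^2
      = (a*(1-b))^2*(‖u‖^2 - 2*⟪u,v⟫ + ‖v‖^2)
        - 2*(a*(1-b))*(b*(1-a))*(⟪u,v⟫ - ⟪u,w⟫ - ‖v‖^2 + ⟪v,w⟫)
        + (b*(1-a))^2*(‖v‖^2 - 2*⟪v,w⟫ + ‖w‖^2) := by
    rw [norm_sub_sq_real, norm_smul, norm_smul, real_inner_smul_left, real_inner_smul_right,
      mul_pow, mul_pow, norm_sub_sq_real, norm_sub_sq_real,
      inner_sub_left, inner_sub_right, inner_sub_right, real_inner_self_eq_norm_sq,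
      real_inner_comm v u]
    simp only [Real.norm_eq_abs, sq_abs]
    ring
  rw [e3] at H3v
  have key := key_ineq a b (‖u‖^2) (‖v‖^2) (‖w‖^2) (⟪u,v⟫) (⟪v,w⟫) (⟪u,w⟫)
    ha ha1 hb hb1 (by rw [real_inner_comm] at hv2; linarith) (by rw [real_inner_comm] at hw2; linarith) H3v
  have hgsq : ‖w - ((1-a)*(1-b)/(1-a*b)) • u‖^2 ≤ (((a+b-2*a*b)/(1-a*b))*‖u‖)^2 := by
    rw [norm_sub_smul_sq, mul_pow, real_inner_comm u w]
    linarith [key]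
  have := Real.sqrt_le_sqrt hgsq
  rwa [Real.sqrt_sq (norm_nonneg _), Real.sqrt_sq (by positivity)] at this

/-- The composition of a `θ₁`-averaged and a `θ₂`-averaged operator (with
`θ₁, θ₂ ∈ (0,1)`) is `θ`-averaged with `θ = (θ₁ + θ₂ − 2θ₁θ₂)/(1 − θ₁θ₂) ∈ (0,1)`. -/
theorem averaged_comp
    (n : ℕ) (O₁ O₂ : EuclideanSpace ℝ (Fin n) → EuclideanSpace ℝ (Fin n))
    (θ₁ θ₂ : ℝ) (hθ₁ : θ₁ ∈ Set.Ioo (0:ℝ) 1) (hθ₂ : θ₂ ∈ Set.Ioo (0:ℝ) 1)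
    (hO₁ : ∃ R₁, LipschitzWith 1 R₁ ∧ ∀ x, O₁ x = (1 - θ₁) • x + θ₁ • R₁ x)
    (hO₂ : ∃ R₂, LipschitzWith 1 R₂ ∧ ∀ x, O₂ x = (1 - θ₂) • x + θ₂ • R₂ x) :
    (θ₁ + θ₂ - 2 * θ₁ * θ₂) / (1 - θ₁ * θ₂) ∈ Set.Ioo (0:ℝ) 1 ∧
    ∃ R, LipschitzWith 1 R ∧ ∀ x,
      (O₁ ∘ O₂) x = (1 - (θ₁ + θ₂ - 2 * θ₁ * θ₂) / (1 - θ₁ * θ₂)) • x +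
        ((θ₁ + θ₂ - 2 * θ₁ * θ₂) / (1 - θ₁ * θ₂)) • R x := by
  obtain ⟨ha, ha1⟩ := hθ₁
  obtain ⟨hb, hb1⟩ := hθ₂
  obtain ⟨R₁, hR₁, hO₁e⟩ := hO₁
  obtain ⟨R₂, hR₂, hO₂e⟩ := hO₂
  have hD : 0 < 1 - θ₁ * θ₂ := by nlinarith
  have hN : 0 < θ₁ + θ₂ - 2 * θ₁ * θ₂ := by nlinarith
  set θ : ℝ := (θ₁ + θ₂ - 2 * θ₁ * θ₂) / (1 - θ₁ * θ₂) with hθdef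
  have hθpos : 0 < θ := div_pos hN hD
  have hθlt : θ < 1 := by
    rw [hθdef, div_lt_one hD]; nlinarith
  have hθne : θ ≠ 0 := ne_of_gt hθpos
  refine ⟨⟨hθpos, hθlt⟩, ?_⟩
  refine ⟨fun x => θ⁻¹ • (O₁ (O₂ x) - (1 - θ) • x), ?_, ?_⟩
  · -- Lipschitz
    apply LipschitzWith.of_dist_le_mul
    intro x y
    rw [dist_eq_norm, dist_eq_norm, NNReal.coe_one, one_mul]
    have hdiff : θ⁻¹ • (O₁ (O₂ x) - (1 - θ) • x) - θ⁻¹ • (O₁ (O₂ y) - (1 - θ) • y)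
        = θ⁻¹ • ((O₁ (O₂ x) - O₁ (O₂ y)) - (1 - θ) • (x - y)) := by
      rw [← smul_sub]; congr 1; rw [smul_sub]; abel
    rw [hdiff, norm_smul, Real.norm_eq_abs, abs_of_pos (inv_pos.mpr hθpos)]
    -- key vector inequality
    have hv : ‖(O₂ x - O₂ y) - (1 - θ₂) • (x - y)‖ ≤ θ₂ * ‖x - y‖ := by
      have e : (O₂ x - O₂ y) - (1 - θ₂) • (x - y) = θ₂ • (R₂ x - R₂ y) := by
        rw [hO₂e x, hO₂e y, smul_sub, smul_sub]; abel
      rw [e, norm_smul, Real.norm_eq_abs, abs_of_pos hb]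
      have := hR₂.dist_le_mul x y
      rw [NNReal.coe_one, one_mul, dist_eq_norm, dist_eq_norm] at this
      exact mul_le_mul_of_nonneg_left this hb.le
    have hw : ‖(O₁ (O₂ x) - O₁ (O₂ y)) - (1 - θ₁) • (O₂ x - O₂ y)‖
        ≤ θ₁ * ‖O₂ x - O₂ y‖ := by
      have e : (O₁ (O₂ x) - O₁ (O₂ y)) - (1 - θ₁) • (O₂ x - O₂ y)
          = θ₁ • (R₁ (O₂ x) - R₁ (O₂ y)) := by
        rw [hO₁e (O₂ x), hO₁e (O₂ y), smul_sub, smul_sub]; abel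
      rw [e, norm_smul, Real.norm_eq_abs, abs_of_pos ha]
      have := hR₁.dist_le_mul (O₂ x) (O₂ y)
      rw [NNReal.coe_one, one_mul, dist_eq_norm, dist_eq_norm] at this
      exact mul_le_mul_of_nonneg_left this ha.le
    have hkey := key_vec θ₁ θ₂ ha ha1 hb hb1 (x - y) (O₂ x - O₂ y)
      (O₁ (O₂ x) - O₁ (O₂ y)) hv hw
    have h1θ : 1 - θ = (1 - θ₁) * (1 - θ₂) / (1 - θ₁ * θ₂) := by
      rw [hθdef]; field_simp; ring
    rw [h1θ]
    calc θ⁻¹ * ‖(O₁ (O₂ x) - O₁ (O₂ y)) - ((1 - θ₁) * (1 - θ₂) / (1 - θ₁ * θ₂)) • (x - y)‖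
        ≤ θ⁻¹ * (((θ₁ + θ₂ - 2 * θ₁ * θ₂) / (1 - θ₁ * θ₂)) * ‖x - y‖) :=
          mul_le_mul_of_nonneg_left hkey (inv_pos.mpr hθpos).le
      _ = ‖x - y‖ := by
          rw [← hθdef, ← mul_assoc, inv_mul_cancel₀ hθne, one_mul]
  · intro x
    simp only [Function.comp_apply]
    rw [smul_inv_smul₀ hθne, add_sub_cancel]
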